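/- arXiv:2501.00853 — 2 statements merged into one kernel-verified Lean document; each statement's English description precedes it below -/
import Mathlib

section
/- Let φ be an Orlicz function with conjugate ψ. Then the conjugate of ψ is φ; that is, for every t ∈ [0,∞), ⨆_{s ≥ 0} (t·s − ψ(s)) = φ(t), where the subtraction is truncated subtraction in [0,∞]. -/
open scoped ENNReal NNReal

/-- Helper: truncated subtraction swap in `ℝ≥0∞`. -/
lemma ennreal_tsub_le_tsub_of_add_le {a b c d : ℝ≥0∞} (hc : c ≠ ⊤) (h : a + c ≤ b + d) :
    a - d ≤ b - c := by
  rw [tsub_le_iff_right]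
  calc a ≤ (b + d) - c := ENNReal.le_sub_of_add_le_right hc h
    _ ≤ (b - c) + d := by
        rw [tsub_le_iff_right]
        calc b + d ≤ (b - c + c) + d := add_le_add_left le_tsub_add d
          _ = b - c + d + c := by ring

/-- Helper: comparing divisions in `ℝ≥0∞` via cross multiplication. -/
lemma ennreal_div_le_div_of_mul_le {x y a b : ℝ≥0∞} (ha0 : a ≠ 0) (hat : a ≠ ⊤)
    (hb0 : b ≠ 0) (hbt : b ≠ ⊤) (h : x * b ≤ y * a) : x / a ≤ y / b := by
  rw [ENNReal.le_div_iff_mul_le (Or.inl hb0) (Or.inl hbt)]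
  have : x / a * b = x * b / a := by
    rw [div_eq_mul_inv, div_eq_mul_inv]; ring
  rw [this, ENNReal.div_le_iff ha0 hat]
  exact h

/-- Helper: the cross (three-chord) inequality for a convex function. -/
lemma cross_ineq (φ : ℝ≥0 → ℝ≥0∞)
    (hmono : Monotone φ)
    (hconv : ∀ a b u v : ℝ≥0, u + v = 1 →
      φ (u * a + v * b) ≤ (u : ℝ≥0∞) * φ a + (v : ℝ≥0∞) * φ b)
    (c w t₁ u : ℝ≥0) (hw : w < t₁) (hu : t₁ < u)
    (hc : (c : ℝ≥0∞) < φ t₁) (ht₁top : φ t₁ ≠ ⊤) (hutop : φ u ≠ ⊤) :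
    ((c : ℝ≥0∞) - φ w) * ((u : ℝ≥0∞) - (t₁ : ℝ≥0∞))
      ≤ (φ u - (c : ℝ≥0∞)) * ((t₁ : ℝ≥0∞) - (w : ℝ≥0∞)) := by
  have hwtop : φ w ≠ ⊤ := fun h => ht₁top (top_le_iff.mp (h ▸ hmono hw.le))
  set A := (φ w).toNNReal with hA
  set B := (φ u).toNNReal with hB
  set P := (φ t₁).toNNReal with hP
  have hAe : φ w = (A : ℝ≥0∞) := (ENNReal.coe_toNNReal hwtop).symm
  have hBe : φ u = (B : ℝ≥0∞) := (ENNReal.coe_toNNReal hutop).symm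
  have hPe : φ t₁ = (P : ℝ≥0∞) := (ENNReal.coe_toNNReal ht₁top).symm
  rw [hAe, hBe]
  rw [← ENNReal.coe_sub, ← ENNReal.coe_sub, ← ENNReal.coe_sub, ← ENNReal.coe_sub,
    ← ENNReal.coe_mul, ← ENNReal.coe_mul, ENNReal.coe_le_coe]
  -- now a pure `ℝ≥0` statement
  by_cases hca : c ≤ A
  · simp [tsub_eq_zero_of_le hca]
  push_neg at hca
  -- convexity instantiated
  have huw : (0:ℝ≥0) < u - w := tsub_pos_of_lt (hw.trans hu)
  set lam : ℝ≥0 := (u - t₁) / (u - w) with hlam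
  set mu : ℝ≥0 := (t₁ - w) / (u - w) with hmu
  have hsum : lam + mu = 1 := by
    rw [hlam, hmu, ← add_div, tsub_add_tsub_cancel hu.le hw.le,
      div_self huw.ne']
  have hcomb : lam * w + mu * u = t₁ := by
    have hnum : (u - t₁) * w + (t₁ - w) * u = t₁ * (u - w) := by
      have h1 : w ≤ u := (hw.trans hu).le
      apply NNReal.coe_injective
      push_cast [NNReal.coe_sub hu.le, NNReal.coe_sub hw.le, NNReal.coe_sub h1]
      ring
    rw [hlam, hmu, div_mul_eq_mul_div, div_mul_eq_mul_div, ← add_div,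
      hnum, mul_div_assoc, div_self huw.ne', mul_one]
  have hconv' := hconv w u lam mu hsum
  rw [hcomb, hAe, hBe, hPe] at hconv'
  rw [← ENNReal.coe_mul, ← ENNReal.coe_mul, ← ENNReal.coe_add, ENNReal.coe_le_coe] at hconv'
  have hcP : c < P := by
    rw [hPe] at hc; exact_mod_cast hc
  have hcB : c ≤ B := by
    have : φ t₁ ≤ φ u := hmono hu.le
    rw [hPe, hBe, ENNReal.coe_le_coe] at this
    exact (hcP.le.trans this)
  -- pass to reals
  rw [← NNReal.coe_le_coe]
  push_cast [NNReal.coe_sub hca.le, NNReal.coe_sub hcB, NNReal.coe_sub hu.le,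
    NNReal.coe_sub hw.le]
  have hP' : (P:ℝ) ≤ lam * A + mu * B := by exact_mod_cast hconv'
  have hcP' : (c:ℝ) ≤ P := by exact_mod_cast hcP.le
  have hwt : (w:ℝ) < t₁ := hw
  have htu : (t₁:ℝ) < u := hu
  have hlam' : (lam:ℝ) = ((u:ℝ) - t₁) / ((u:ℝ) - w) := by
    rw [hlam]; push_cast [NNReal.coe_sub hu.le, NNReal.coe_sub (hw.trans hu).le]; ring
  have hmu' : (mu:ℝ) = ((t₁:ℝ) - w) / ((u:ℝ) - w) := by
    rw [hmu]; push_cast [NNReal.coe_sub hw.le, NNReal.coe_sub (hw.trans hu).le]; ring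
  rw [hlam', hmu'] at hP'
  have huw' : (0:ℝ) < (u:ℝ) - w := by linarith
  have hkey : (P:ℝ) * ((u:ℝ) - w) ≤ ((u:ℝ) - t₁) * A + ((t₁:ℝ) - w) * B := by
    have := mul_le_mul_of_nonneg_right hP' huw'.le
    calc (P:ℝ) * ((u:ℝ) - w) ≤ (((u:ℝ) - t₁) / ((u:ℝ) - w) * A
          + ((t₁:ℝ) - w) / ((u:ℝ) - w) * B) * ((u:ℝ) - w) := this
      _ = ((u:ℝ) - t₁) * A + ((t₁:ℝ) - w) * B := by field_simp
  nlinarith [mul_le_mul_of_nonneg_right hcP' huw'.le]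

/-- the conjugate of the conjugate of an Orlicz function φ is φ itself. -/
theorem biconjugate_of_orlicz
    (φ : ℝ≥0 → ℝ≥0∞)
    (hzero : φ 0 = 0)
    (hmono : Monotone φ)
    (hconv : ∀ a b u v : ℝ≥0, u + v = 1 →
      φ (u * a + v * b) ≤ (u : ℝ≥0∞) * φ a + (v : ℝ≥0∞) * φ b)
    (hlc : ∀ t₀ : ℝ≥0, ContinuousWithinAt φ (Set.Iio t₀) t₀)
    (hnt₁ : ∃ a : ℝ≥0, 0 < a ∧ 0 < φ a)
    (hnt₂ : ∃ b : ℝ≥0, 0 < b ∧ φ b < ⊤)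
    (ψ : ℝ≥0 → ℝ≥0∞)
    (hψ : ∀ s : ℝ≥0, ψ s = ⨆ t : ℝ≥0, ((t : ℝ≥0∞) * (s : ℝ≥0∞) - φ t)) :
    ∀ t : ℝ≥0, (⨆ s : ℝ≥0, ((t : ℝ≥0∞) * (s : ℝ≥0∞) - ψ s)) = φ t := by
  intro t
  apply le_antisymm
  · -- easy direction
    apply iSup_le
    intro s
    rw [tsub_le_iff_right]
    have h1 : (t : ℝ≥0∞) * s - φ t ≤ ψ s := by
      rw [hψ s]
      exact le_iSup (fun u : ℝ≥0 => (u : ℝ≥0∞) * s - φ u) t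
    calc (t : ℝ≥0∞) * s ≤ ((t : ℝ≥0∞) * s - φ t) + φ t := le_tsub_add
      _ ≤ ψ s + φ t := by gcongr
      _ = φ t + ψ s := add_comm _ _
  · -- hard direction
    apply ENNReal.le_of_forall_nnreal_lt
    intro c hc
    have ht0 : 0 < t := by
      rcases eq_or_lt_of_le (show 0 ≤ t from zero_le) with h | h
      · rw [← h, hzero] at hc; exact absurd hc (not_lt_of_ge zero_le)
      · exact h
    by_cases hI : ∃ t₁, t₁ < t ∧ φ t₁ = ⊤
    · -- Case I : φ jumps to ⊤ strictly before t
      obtain ⟨t₁, ht₁t, ht₁top⟩ := hI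
      set s : ℝ≥0 := (c + 1) / (t - t₁) with hs
      have hst : s * (t - t₁) = c + 1 := div_mul_cancel₀ _ (tsub_pos_of_lt ht₁t).ne'
      have hψs : ψ s ≤ (s : ℝ≥0∞) * t₁ := by
        rw [hψ s]
        apply iSup_le
        intro u
        rcases le_or_gt u t₁ with hu | hu
        · calc (u : ℝ≥0∞) * s - φ u ≤ (u : ℝ≥0∞) * s := tsub_le_self
            _ ≤ (s : ℝ≥0∞) * t₁ := by rw [mul_comm]; gcongr <;> exact_mod_cast hu
        · have : φ u = ⊤ := top_le_iff.mp (ht₁top ▸ hmono hu.le)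
          simp [this]
      have hψtop : ψ s ≠ ⊤ :=
        ne_top_of_le_ne_top (ENNReal.mul_ne_top ENNReal.coe_ne_top ENNReal.coe_ne_top) hψs
      have hfin : (c : ℝ≥0∞) ≤ (t : ℝ≥0∞) * s - ψ s := by
        apply ENNReal.le_sub_of_add_le_right hψtop
        calc (c : ℝ≥0∞) + ψ s ≤ (c : ℝ≥0∞) + (s : ℝ≥0∞) * t₁ := add_le_add_right hψs _
          _ ≤ ((c : ℝ≥0) + 1 + s * t₁ : ℝ≥0) := by
              push_cast
              exact add_le_add_left (le_add_right le_rfl) _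
          _ = ((s * (t - t₁) + s * t₁ : ℝ≥0) : ℝ≥0∞) := by rw [hst]
          _ = ((s * ((t - t₁) + t₁) : ℝ≥0) : ℝ≥0∞) := by rw [mul_add]
          _ = ((s * t : ℝ≥0) : ℝ≥0∞) := by rw [tsub_add_cancel_of_le ht₁t.le]
          _ = (t : ℝ≥0∞) * s := by push_cast; ring
      exact hfin.trans (le_iSup (fun s : ℝ≥0 => (t : ℝ≥0∞) * s - ψ s) s)
    · -- Case II : φ is finite on [0, t)
      push_neg at hI
      -- find t₁ < t with c < φ t₁, using left-continuity at t
      have h3 : φ ⁻¹' (Set.Ioi (c : ℝ≥0∞)) ∈ nhdsWithin t (Set.Iio t) :=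
        hlc t (Ioi_mem_nhds hc)
      obtain ⟨l, hl, hIoo⟩ := (mem_nhdsLT_iff_exists_Ioo_subset' ht0).mp h3
      obtain ⟨t₁, hlt₁, ht₁t⟩ := exists_between (Set.mem_Iio.mp hl)
      have hct₁ : (c : ℝ≥0∞) < φ t₁ := hIoo ⟨hlt₁, ht₁t⟩
      have ht₁top : φ t₁ ≠ ⊤ := hI t₁ ht₁t
      have ht₁0 : 0 < t₁ := by
        rcases eq_or_lt_of_le (show 0 ≤ t₁ from zero_le) with h | h
        · rw [← h, hzero] at hct₁; exact absurd hct₁ (not_lt_of_ge zero_le)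
        · exact h
      -- find u₀ < t₁ with φ > c on (u₀, t₁), using left-continuity at t₁
      have h4 : φ ⁻¹' (Set.Ioi (c : ℝ≥0∞)) ∈ nhdsWithin t₁ (Set.Iio t₁) :=
        hlc t₁ (Ioi_mem_nhds hct₁)
      obtain ⟨u₀, hu₀, hIoo₁⟩ := (mem_nhdsLT_iff_exists_Ioo_subset' ht₁0).mp h4
      have hu₀t₁ : u₀ < t₁ := Set.mem_Iio.mp hu₀
      -- the supremum of left slopes
      set L : ℝ≥0∞ := ⨆ w ∈ Set.Iio t₁, ((c : ℝ≥0∞) - φ w) / ((t₁ : ℝ≥0∞) - (w : ℝ≥0∞)) with hL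
      have hsubcoe : ∀ w : ℝ≥0, w ≤ t₁ → ((t₁ : ℝ≥0∞) - (w : ℝ≥0∞)) = ((t₁ - w : ℝ≥0) : ℝ≥0∞) := by
        intro w _; rw [ENNReal.coe_sub]
      have hLM : L ≤ (c : ℝ≥0∞) / ((t₁ - u₀ : ℝ≥0) : ℝ≥0∞) := by
        apply iSup₂_le
        intro w hw
        rcases le_or_gt w u₀ with hwu | hwu
        · apply ENNReal.div_le_div
          · exact tsub_le_self
          · rw [hsubcoe w (le_of_lt hw)]
            exact_mod_cast tsub_le_tsub_left hwu t₁
        · have : (c : ℝ≥0∞) < φ w := hIoo₁ ⟨hwu, hw⟩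
          rw [tsub_eq_zero_of_le this.le, ENNReal.zero_div]
          exact zero_le
      have hLtop : L ≠ ⊤ := by
        refine ne_top_of_le_ne_top ?_ hLM
        exact (ENNReal.div_lt_top ENNReal.coe_ne_top
          (by exact_mod_cast (tsub_pos_of_lt hu₀t₁).ne')).ne
      set s : ℝ≥0 := L.toNNReal with hsdef
      have hsL : (s : ℝ≥0∞) = L := ENNReal.coe_toNNReal hLtop
      -- for every w < t₁ : c ≤ s * (t₁ - w) + φ w
      have key : ∀ w : ℝ≥0, w < t₁ → (c : ℝ≥0∞) ≤ (s : ℝ≥0∞) * ((t₁ - w : ℝ≥0) : ℝ≥0∞) + φ w := by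
        intro w hw
        have h5 : ((c : ℝ≥0∞) - φ w) / ((t₁ : ℝ≥0∞) - (w : ℝ≥0∞)) ≤ (s : ℝ≥0∞) := by
          rw [hsL, hL]
          exact le_biSup (fun w : ℝ≥0 => ((c : ℝ≥0∞) - φ w) / ((t₁ : ℝ≥0∞) - (w : ℝ≥0∞))) hw
        rw [hsubcoe w hw.le] at h5
        rw [ENNReal.div_le_iff (by exact_mod_cast (tsub_pos_of_lt hw).ne') ENNReal.coe_ne_top] at h5
        calc (c : ℝ≥0∞) ≤ ((c : ℝ≥0∞) - φ w) + φ w := le_tsub_add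
          _ ≤ (s : ℝ≥0∞) * ((t₁ - w : ℝ≥0) : ℝ≥0∞) + φ w := by gcongr
      have hct₁s : (c : ℝ≥0∞) ≤ (s : ℝ≥0∞) * t₁ := by
        have := key 0 ht₁0
        simpa [hzero] using this
      -- ψ s ≤ s t₁ - c
      have hψs : ψ s ≤ (s : ℝ≥0∞) * t₁ - c := by
        rw [hψ s]
        apply iSup_le
        intro u
        apply ennreal_tsub_le_tsub_of_add_le ENNReal.coe_ne_top
        -- goal: u * s + c ≤ s * t₁ + φ u
        rcases lt_trichotomy u t₁ with hu | hu | hu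
        · have h6 := key u hu
          calc (u : ℝ≥0∞) * s + c ≤ (u : ℝ≥0∞) * s + ((s : ℝ≥0∞) * ((t₁ - u : ℝ≥0) : ℝ≥0∞) + φ u) := by gcongr
            _ = ((u * s + s * (t₁ - u) : ℝ≥0) : ℝ≥0∞) + φ u := by push_cast; ring
            _ = ((s * t₁ : ℝ≥0) : ℝ≥0∞) + φ u := by
                have huid : u * s + s * (t₁ - u) = s * t₁ := by
                  rw [mul_comm u s, ← mul_add, add_tsub_cancel_of_le hu.le]
                rw [huid]
            _ = (s : ℝ≥0∞) * t₁ + φ u := by push_cast; ring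
        · subst hu
          have : (c : ℝ≥0∞) ≤ φ u := hct₁.le
          calc (u : ℝ≥0∞) * s + c ≤ (u : ℝ≥0∞) * s + φ u := by gcongr
            _ = (s : ℝ≥0∞) * u + φ u := by ring
        · by_cases hutop : φ u = ⊤
          · simp [hutop]
          · -- use the cross inequality
            have h7 : (s : ℝ≥0∞) ≤ (φ u - c) / ((u : ℝ≥0∞) - (t₁ : ℝ≥0∞)) := by
              rw [hsL, hL]
              apply iSup₂_le
              intro w hw
              have hcross := cross_ineq φ hmono hconv c w t₁ u hw hu hct₁ ht₁top hutop
              have ha0 : ((t₁ : ℝ≥0∞) - (w : ℝ≥0∞)) ≠ 0 := by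
                rw [hsubcoe w hw.le]; exact_mod_cast (tsub_pos_of_lt hw).ne'
              have hat : ((t₁ : ℝ≥0∞) - (w : ℝ≥0∞)) ≠ ⊤ := by
                rw [hsubcoe w hw.le]; exact ENNReal.coe_ne_top
              have hb0 : ((u : ℝ≥0∞) - (t₁ : ℝ≥0∞)) ≠ 0 := by
                rw [← ENNReal.coe_sub]; exact_mod_cast (tsub_pos_of_lt hu).ne'
              have hbt : ((u : ℝ≥0∞) - (t₁ : ℝ≥0∞)) ≠ ⊤ := by
                rw [← ENNReal.coe_sub]; exact ENNReal.coe_ne_top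
              exact ennreal_div_le_div_of_mul_le ha0 hat hb0 hbt hcross
            have hb0 : ((u : ℝ≥0∞) - (t₁ : ℝ≥0∞)) ≠ 0 := by
              rw [← ENNReal.coe_sub]; exact_mod_cast (tsub_pos_of_lt hu).ne'
            have hbt : ((u : ℝ≥0∞) - (t₁ : ℝ≥0∞)) ≠ ⊤ := by
              rw [← ENNReal.coe_sub]; exact ENNReal.coe_ne_top
            rw [ENNReal.le_div_iff_mul_le (Or.inl hb0) (Or.inl hbt)] at h7
            have hcu : (c : ℝ≥0∞) ≤ φ u := hct₁.le.trans (hmono hu.le)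
            have hsplit : (u : ℝ≥0∞) * s = (s : ℝ≥0∞) * t₁ + (s : ℝ≥0∞) * ((u : ℝ≥0∞) - (t₁ : ℝ≥0∞)) := by
              rw [← ENNReal.coe_sub, ← ENNReal.coe_mul, ← ENNReal.coe_mul, ← ENNReal.coe_mul,
                ← ENNReal.coe_add, ENNReal.coe_inj, ← mul_add,
                add_tsub_cancel_of_le hu.le, mul_comm]
            calc (u : ℝ≥0∞) * s + c
                = ((s : ℝ≥0∞) * t₁ + (s : ℝ≥0∞) * ((u : ℝ≥0∞) - (t₁ : ℝ≥0∞))) + c := by rw [hsplit]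
              _ ≤ ((s : ℝ≥0∞) * t₁ + (φ u - c)) + c := by gcongr
              _ = (s : ℝ≥0∞) * t₁ + ((φ u - c) + c) := by rw [add_assoc]
              _ = (s : ℝ≥0∞) * t₁ + φ u := by rw [tsub_add_cancel_of_le hcu]
      have hψtop : ψ s ≠ ⊤ :=
        ne_top_of_le_ne_top (ENNReal.mul_ne_top ENNReal.coe_ne_top ENNReal.coe_ne_top)
          (hψs.trans tsub_le_self)
      have hfin : (c : ℝ≥0∞) ≤ (t : ℝ≥0∞) * s - ψ s := by
        apply ENNReal.le_sub_of_add_le_right hψtop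
        calc (c : ℝ≥0∞) + ψ s ≤ (c : ℝ≥0∞) + ((s : ℝ≥0∞) * t₁ - c) := add_le_add_right hψs _
          _ = (s : ℝ≥0∞) * t₁ := add_tsub_cancel_of_le hct₁s
          _ ≤ (s : ℝ≥0∞) * t := by gcongr <;> exact_mod_cast ht₁t.le
          _ = (t : ℝ≥0∞) * s := mul_comm _ _
      exact hfin.trans (le_iSup (fun s : ℝ≥0 => (t : ℝ≥0∞) * s - ψ s) s)
end

section
/- Let (Ω, ℱ, P) be a probability space, Φ a random Orlicz function, and let Ψ be its random conjugate, i.e. for each s ∈ L⁰₊(ℱ), Ψ(s) is the almost-everywhere least upper bound of the family { t·s ∸ Φ(t) : t ∈ L⁰₊(ℱ) } (truncated subtraction in [0,∞]). Then the random conjugate of Ψ is Φ: for every t ∈ L⁰₊(ℱ), the almost-everywhere least upper bound of the family { t·s ∸ Ψ(s) : s ∈ L⁰₊(ℱ) } exists and equals Φ(t) almost everywhere. -/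
open scoped ENNReal NNReal
open scoped Classical
open MeasureTheory Filter

/-- A random Orlicz function on the probability space `(Ω, ℱ, P)`: a map from
(classes of) nonnegative random variables to (classes of) `[0,∞]`-valued random
variables which is well defined on a.e.-classes, vanishes at `0`, is left-continuous
(for convergence in probability), increasing, `L⁰(ℱ)`-convex and nontrivial. -/
def IsRandomOrlicz {Ω : Type*} [MeasurableSpace Ω] (P : Measure Ω)
    (Φ : (Ω → ℝ≥0) → Ω → ℝ≥0∞) : Prop :=
  (∀ t₁ t₂ : Ω → ℝ≥0, Measurable t₁ → Measurable t₂ → t₁ =ᵐ[P] t₂ →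
    Φ t₁ =ᵐ[P] Φ t₂) ∧
  (∀ t : Ω → ℝ≥0, Measurable t → AEMeasurable (Φ t) P) ∧
  Φ 0 =ᵐ[P] 0 ∧
  (∀ t₀ : Ω → ℝ≥0, Measurable t₀ → ∀ ts : ℕ → Ω → ℝ≥0,
    (∀ n, Measurable (ts n)) → (∀ n, ts n ≤ᵐ[P] ts (n + 1)) →
    (∀ n, ts n ≤ᵐ[P] t₀) → TendstoInMeasure P ts atTop t₀ →
    ∀ ε : ℝ≥0∞, 0 < ε →
      Tendsto (fun n => P {ω | ε ≤ max (Φ (ts n) ω - Φ t₀ ω) (Φ t₀ ω - Φ (ts n) ω)})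
        atTop (nhds 0)) ∧
  (∀ t₁ t₂ : Ω → ℝ≥0, Measurable t₁ → Measurable t₂ → t₁ ≤ᵐ[P] t₂ →
    Φ t₁ ≤ᵐ[P] Φ t₂) ∧
  (∀ ζ : Ω → ℝ≥0, Measurable ζ → (∀ᵐ ω ∂P, ζ ω ≤ 1) →
    ∀ t₁ t₂ : Ω → ℝ≥0, Measurable t₁ → Measurable t₂ →
      Φ (fun ω => ζ ω * t₁ ω + (1 - ζ ω) * t₂ ω) ≤ᵐ[P]
        fun ω => (ζ ω : ℝ≥0∞) * Φ t₁ ω + ((1 - ζ ω : ℝ≥0) : ℝ≥0∞) * Φ t₂ ω) ∧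
  (∃ t : Ω → ℝ≥0, Measurable t ∧ (∀ᵐ ω ∂P, 0 < t ω) ∧
    ∀ᵐ ω ∂P, 0 < Φ t ω ∧ Φ t ω < ⊤)

/-- `u` is the a.e. least upper bound of the family `{ t·s ∸ Φ(t) : t ∈ L⁰₊(ℱ) }`,
i.e. a version of the random conjugate `Ψ(s)` of `Φ` at `s`. -/
def IsAERandomConjugateAt {Ω : Type*} [MeasurableSpace Ω] (P : Measure Ω)
    (Φ : (Ω → ℝ≥0) → Ω → ℝ≥0∞) (s : Ω → ℝ≥0) (u : Ω → ℝ≥0∞) : Prop :=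
  AEMeasurable u P ∧
  (∀ t : Ω → ℝ≥0, Measurable t →
    (fun ω => ((t ω * s ω : ℝ≥0) : ℝ≥0∞) - Φ t ω) ≤ᵐ[P] u) ∧
  (∀ v : Ω → ℝ≥0∞, AEMeasurable v P →
    (∀ t : Ω → ℝ≥0, Measurable t →
      (fun ω => ((t ω * s ω : ℝ≥0) : ℝ≥0∞) - Φ t ω) ≤ᵐ[P] v) →
    u ≤ᵐ[P] v)

section Helpers
variable {Ω : Type*} [MeasurableSpace Ω] {P : Measure Ω}
  {Φ : (Ω → ℝ≥0) → Ω → ℝ≥0∞}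

/-- Locality of a random Orlicz function. -/
lemma RO.loc (hΦ : IsRandomOrlicz P Φ) {A : Set Ω} (hA : MeasurableSet A)
    {u w : Ω → ℝ≥0} (hu : Measurable u) (hw : Measurable w) :
    ∀ᵐ ω ∂P, ω ∈ A → Φ (A.piecewise u w) ω = Φ u ω := by
  obtain ⟨hcong, hmeas, hzero, hleft, hmono, hconv, hnt⟩ := hΦ
  set ζ : Ω → ℝ≥0 := A.piecewise (fun _ => 1) (fun _ => 0) with hζdef
  have hζm : Measurable ζ := Measurable.piecewise hA measurable_const measurable_const
  have hζ1 : ∀ᵐ ω ∂P, ζ ω ≤ 1 := by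
    refine Filter.Eventually.of_forall fun ω => ?_
    by_cases h : ω ∈ A <;> simp [hζdef, Set.piecewise, h]
  have hgm : Measurable (A.piecewise u w) := Measurable.piecewise hA hu hw
  have h1 := hconv ζ hζm hζ1 u w hu hw
  have h2 := hconv ζ hζm hζ1 (A.piecewise u w) u hgm hu
  have e1 : (fun ω => ζ ω * u ω + (1 - ζ ω) * w ω) = A.piecewise u w := by
    funext ω; by_cases h : ω ∈ A <;> simp [hζdef, Set.piecewise, h]
  have e2 : (fun ω => ζ ω * (A.piecewise u w) ω + (1 - ζ ω) * u ω) = u := by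
    funext ω; by_cases h : ω ∈ A <;> simp [hζdef, Set.piecewise, h]
  rw [e1] at h1; rw [e2] at h2
  filter_upwards [h1, h2] with ω hω1 hω2 hmem
  have hζω : ζ ω = 1 := by simp [hζdef, Set.piecewise, hmem]
  rw [hζω] at hω1 hω2
  simp only [ENNReal.coe_one, one_mul, tsub_self, ENNReal.coe_zero, zero_mul, add_zero] at hω1 hω2
  exact le_antisymm hω1 hω2

/-- If `u = w` a.e. on `A` then `Φ u = Φ w` a.e. on `A`. -/
lemma RO.congrOn (hΦ : IsRandomOrlicz P Φ) {A : Set Ω} (hA : MeasurableSet A)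
    {u w : Ω → ℝ≥0} (hu : Measurable u) (hw : Measurable w)
    (h : ∀ᵐ ω ∂P, ω ∈ A → u ω = w ω) :
    ∀ᵐ ω ∂P, ω ∈ A → Φ u ω = Φ w ω := by
  have hgm : Measurable (A.piecewise u w) := Measurable.piecewise hA hu hw
  have hgw : A.piecewise u w =ᵐ[P] w := by
    filter_upwards [h] with ω hω
    by_cases hm : ω ∈ A
    · simp [Set.piecewise, hm, hω hm]
    · simp [Set.piecewise, hm]
  have h1 := hΦ.1 _ w hgm hw hgw
  have h2 := RO.loc hΦ hA hu hw
  filter_upwards [h1, h2] with ω hω1 hω2 hmem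
  rw [← hω2 hmem, hω1]

/-- If `u ≤ w` a.e. on `A` then `Φ u ≤ Φ w` a.e. on `A`. -/
lemma RO.monoOn (hΦ : IsRandomOrlicz P Φ) {A : Set Ω} (hA : MeasurableSet A)
    {u w : Ω → ℝ≥0} (hu : Measurable u) (hw : Measurable w)
    (h : ∀ᵐ ω ∂P, ω ∈ A → u ω ≤ w ω) :
    ∀ᵐ ω ∂P, ω ∈ A → Φ u ω ≤ Φ w ω := by
  have hmm : Measurable fun ω => max (u ω) (w ω) := hu.max hw
  have h1 := hΦ.2.2.2.2.1 u (fun ω => max (u ω) (w ω)) hu hmm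
    (Filter.Eventually.of_forall fun ω => le_max_left _ _)
  have h2 := RO.congrOn hΦ hA hmm hw (by filter_upwards [h] with ω hω hm; simp [max_eq_right (hω hm)])
  filter_upwards [h1, h2] with ω hω1 hω2 hmem
  exact hω1.trans_eq (hω2 hmem)

/-- Localized convexity. -/
lemma RO.convexOn (hΦ : IsRandomOrlicz P Φ) {A : Set Ω} (hA : MeasurableSet A)
    {ζ p t₁ t₂ : Ω → ℝ≥0} (hζ : Measurable ζ) (hζ1 : ∀ᵐ ω ∂P, ζ ω ≤ 1)
    (hp : Measurable p) (h1 : Measurable t₁) (h2 : Measurable t₂)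
    (hcomb : ∀ᵐ ω ∂P, ω ∈ A → p ω = ζ ω * t₁ ω + (1 - ζ ω) * t₂ ω) :
    ∀ᵐ ω ∂P, ω ∈ A →
      Φ p ω ≤ (ζ ω : ℝ≥0∞) * Φ t₁ ω + ((1 - ζ ω : ℝ≥0) : ℝ≥0∞) * Φ t₂ ω := by
  have hcm : Measurable fun ω => ζ ω * t₁ ω + (1 - ζ ω) * t₂ ω :=
    ((hζ.mul h1).add ((measurable_const.sub hζ).mul h2))
  have hc := hΦ.2.2.2.2.2.1 ζ hζ hζ1 t₁ t₂ h1 h2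
  have hcg := RO.congrOn hΦ hA hp hcm hcomb
  filter_upwards [hc, hcg] with ω hω1 hω2 hmem
  exact (hω2 hmem).trans_le hω1

end Helpers

section NN
lemma nna1 (lam mu x y : ℝ≥0) (hlm : lam < mu) (hx : 0 < x) (hy : mu * x ≤ y) :
    mu * x = ((y - mu*x)/(y - lam*x)) * (lam*x) + (1 - (y - mu*x)/(y - lam*x)) * y := by
  have h1 : lam * x ≤ mu * x := mul_le_mul_left hlm.le x
  have h2 : lam * x < y := lt_of_lt_of_le (mul_lt_mul_of_pos_right hlm hx) hy
  have hδ : (0:ℝ) < (y:ℝ) - lam*x := by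
    have := h2; rw [← NNReal.coe_lt_coe] at this; push_cast at this; linarith
  have hδ' : (y:ℝ) - x*lam ≠ 0 := by rw [mul_comm]; exact hδ.ne'
  have hζ1 : (y - mu*x)/(y - lam*x) ≤ 1 :=
    div_le_one_of_le₀ (tsub_le_tsub_left h1 y) zero_le
  rw [← NNReal.coe_inj]
  push_cast [NNReal.coe_sub hy, NNReal.coe_sub (h1.trans hy), NNReal.coe_sub hζ1]
  field_simp
  ring

lemma nna3 (lam mu x y : ℝ≥0) (hlm : lam < mu) (hx : 0 < x) (hy : mu * x ≤ y) :
    (1 - (y - mu*x)/(y - lam*x)) * (y - lam*x) = (mu-lam)*x := by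
  have h1 : lam * x ≤ mu * x := mul_le_mul_left hlm.le x
  have h2 : lam * x < y := lt_of_lt_of_le (mul_lt_mul_of_pos_right hlm hx) hy
  have hδ : (0:ℝ) < (y:ℝ) - lam*x := by
    have := h2; rw [← NNReal.coe_lt_coe] at this; push_cast at this; linarith
  have hδ' : (y:ℝ) - x*lam ≠ 0 := by rw [mul_comm]; exact hδ.ne'
  have hζ1 : (y - mu*x)/(y - lam*x) ≤ 1 :=
    div_le_one_of_le₀ (tsub_le_tsub_left h1 y) zero_le
  rw [← NNReal.coe_inj]
  push_cast [NNReal.coe_sub hy, NNReal.coe_sub (h1.trans hy), NNReal.coe_sub hζ1,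
    NNReal.coe_sub hlm.le]
  field_simp
  ring

lemma nnc1 (lam mu x y : ℝ≥0) (hlm : lam < mu) (hx : 0 < x) (hy : y ≤ lam*x) :
    lam * x = (((mu-lam)*x)/(mu*x - y)) * y + (1 - ((mu-lam)*x)/(mu*x - y)) * (mu*x) := by
  have h2 : y < mu * x := lt_of_le_of_lt hy (mul_lt_mul_of_pos_right hlm hx)
  have hδ : (0:ℝ) < (mu:ℝ)*x - y := by
    have := h2; rw [← NNReal.coe_lt_coe] at this; push_cast at this; linarith
  have hδ' : (x:ℝ)*mu - y ≠ 0 := by rw [mul_comm]; exact hδ.ne'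
  have hd : (mu-lam)*x = mu*x - lam*x := tsub_mul mu lam x
  have hζ1 : ((mu-lam)*x)/(mu*x - y) ≤ 1 := by
    rw [hd]; exact div_le_one_of_le₀ (tsub_le_tsub_left hy (mu*x)) zero_le
  rw [← NNReal.coe_inj]
  push_cast [NNReal.coe_sub h2.le, NNReal.coe_sub hζ1, NNReal.coe_sub hlm.le]
  field_simp
  ring

lemma nnc3 (lam mu x y : ℝ≥0) (hlm : lam < mu) (hx : 0 < x) (hy : y ≤ lam*x) :
    (1 - ((mu-lam)*x)/(mu*x - y)) * (mu*x - y) = lam*x - y := by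
  have h2 : y < mu * x := lt_of_le_of_lt hy (mul_lt_mul_of_pos_right hlm hx)
  have hδ : (0:ℝ) < (mu:ℝ)*x - y := by
    have := h2; rw [← NNReal.coe_lt_coe] at this; push_cast at this; linarith
  have hδ' : (x:ℝ)*mu - y ≠ 0 := by rw [mul_comm]; exact hδ.ne'
  have hd : (mu-lam)*x = mu*x - lam*x := tsub_mul mu lam x
  have hζ1 : ((mu-lam)*x)/(mu*x - y) ≤ 1 := by
    rw [hd]; exact div_le_one_of_le₀ (tsub_le_tsub_left hy (mu*x)) zero_le
  rw [← NNReal.coe_inj]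
  push_cast [NNReal.coe_sub h2.le, NNReal.coe_sub hζ1, NNReal.coe_sub hlm.le,
    NNReal.coe_sub hy]
  field_simp
  ring

lemma nnkey (lam mu : ℝ≥0) (hlm : lam < mu) (hmu : 0 < mu) :
    (lam/mu) * ((mu-lam) + mu) ≤ mu := by
  rw [← NNReal.coe_le_coe]
  push_cast [NNReal.coe_sub hlm.le]
  rw [div_mul_eq_mul_div, div_le_iff₀ (by exact_mod_cast hmu)]
  nlinarith [NNReal.coe_le_coe.2 hlm.le]
end NN

lemma RO.step1 {Ω : Type*} [MeasurableSpace Ω] {P : Measure Ω}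
    {Φ : (Ω → ℝ≥0) → Ω → ℝ≥0∞} (hΦ : IsRandomOrlicz P Φ)
    {Ψ : (Ω → ℝ≥0) → Ω → ℝ≥0∞}
    (hΨ : ∀ s : Ω → ℝ≥0, Measurable s → IsAERandomConjugateAt P Φ s (Ψ s))
    {t : Ω → ℝ≥0} (ht : Measurable t)
    {v : Ω → ℝ≥0∞} (hvm : AEMeasurable v P)
    (hv : ∀ s : Ω → ℝ≥0, Measurable s →
      (fun ω => ((s ω * t ω : ℝ≥0) : ℝ≥0∞) - Ψ s ω) ≤ᵐ[P] v)
    (lam : ℝ≥0) (hlam : lam < 1) :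
    Φ (fun ω => lam * t ω) ≤ᵐ[P] v := by
  classical
  have hlamR : (lam : ℝ) < 1 := by exact_mod_cast hlam
  set mu : ℝ≥0 := (1 + lam) / 2 with hmudef
  have hlm : lam < mu := by
    rw [← NNReal.coe_lt_coe, hmudef]; push_cast; linarith
  have hmu1 : mu < 1 := by
    rw [← NNReal.coe_lt_coe, hmudef]; push_cast; linarith
  have hmu0 : 0 < mu := lt_of_le_of_lt (zero_le) hlm
  set tl : Ω → ℝ≥0 := fun ω => lam * t ω with htldef
  set tm : Ω → ℝ≥0 := fun ω => mu * t ω with htmdef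
  have htlm : Measurable tl := ht.const_mul lam
  have htmm : Measurable tm := ht.const_mul mu
  have htltm : ∀ ω, tl ω ≤ tm ω := fun ω => mul_le_mul_left hlm.le (t ω)
  obtain ⟨Fl, hFlm, hFl⟩ : ∃ F : Ω → ℝ≥0∞, Measurable F ∧ Φ tl =ᵐ[P] F :=
    ⟨(hΦ.2.1 tl htlm).mk _, (hΦ.2.1 tl htlm).measurable_mk, (hΦ.2.1 tl htlm).ae_eq_mk⟩
  obtain ⟨Fm, hFmm, hFm⟩ : ∃ F : Ω → ℝ≥0∞, Measurable F ∧ Φ tm =ᵐ[P] F :=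
    ⟨(hΦ.2.1 tm htmm).mk _, (hΦ.2.1 tm htmm).measurable_mk, (hΦ.2.1 tm htmm).ae_eq_mk⟩
  have hFle : ∀ᵐ ω ∂P, Fl ω ≤ Fm ω := by
    have h := hΦ.2.2.2.2.1 tl tm htlm htmm (Eventually.of_forall fun ω => htltm ω)
    filter_upwards [h, hFl, hFm] with ω h e1 e2
    rw [← e1, ← e2]; exact h
  have hFconv : ∀ᵐ ω ∂P, Fl ω ≤ ((lam/mu : ℝ≥0) : ℝ≥0∞) * Fm ω := by
    have hc := hΦ.2.2.2.2.2.1 (fun _ => lam/mu) measurable_const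
      (Eventually.of_forall fun _ => div_le_one_of_le₀ hlm.le zero_le) tm 0 htmm measurable_zero
    have e : (fun ω => (lam/mu) * tm ω + (1 - lam/mu) * (0:Ω→ℝ≥0) ω) = tl := by
      funext ω
      simp only [htmdef, htldef, Pi.zero_apply, mul_zero, add_zero, ← mul_assoc,
        div_mul_cancel₀ _ hmu0.ne']
    rw [e] at hc
    filter_upwards [hc, hΦ.2.2.1, hFl, hFm] with ω h h0 e1 e2
    rw [← e1, ← e2]
    simpa [h0] using h
  -- Region A : t ω = 0
  have hA : ∀ᵐ ω ∂P, t ω = 0 → Φ tl ω ≤ v ω := by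
    have hAm : MeasurableSet {ω | t ω = 0} := ht (measurableSet_singleton 0)
    have h1 := RO.congrOn hΦ hAm htlm measurable_zero
      (h := Eventually.of_forall fun ω (h : t ω = 0) => by simp [htldef, h])
    filter_upwards [h1, hΦ.2.2.1] with ω h1 h0 hω
    rw [h1 hω, h0]
    exact zero_le
  -- Regions C and G
  set C : Set Ω := {ω | 0 < t ω} ∩ {ω | Fm ω = ⊤} with hCdef
  set G : Set Ω := {ω | 0 < t ω} ∩ {ω | Fm ω = ⊤}ᶜ with hGdef
  have hCm : MeasurableSet C :=
    (measurableSet_lt measurable_const ht).inter (hFmm (measurableSet_singleton ⊤))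
  have hGm : MeasurableSet G :=
    (measurableSet_lt measurable_const ht).inter (hFmm (measurableSet_singleton ⊤)).compl
  -- Region C : v = ⊤
  have hC : ∀ᵐ ω ∂P, ω ∈ C → v ω = ⊤ := by
    have key : ∀ n : ℕ, ∀ᵐ ω ∂P, ω ∈ C → (n:ℝ≥0∞) * ((1 - mu : ℝ≥0) : ℝ≥0∞) ≤ v ω := by
      intro n
      set sn : Ω → ℝ≥0 := C.indicator (fun ω => (n:ℝ≥0) * (t ω)⁻¹) with hsndef
      have hsnm : Measurable sn := (measurable_const.mul ht.inv).indicator hCm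
      set wn : Ω → ℝ≥0∞ := C.indicator (fun _ => (((n:ℝ≥0) * mu : ℝ≥0) : ℝ≥0∞)) with hwndef
      have hwnm : Measurable wn := measurable_const.indicator hCm
      have hub : ∀ t' : Ω → ℝ≥0, Measurable t' →
          (fun ω => ((t' ω * sn ω : ℝ≥0) : ℝ≥0∞) - Φ t' ω) ≤ᵐ[P] wn := by
        intro t' ht'
        have hDm : MeasurableSet (C ∩ {ω | tm ω ≤ t' ω}) :=
          hCm.inter (measurableSet_le htmm ht')
        have hD := RO.monoOn hΦ hDm htmm ht'
          (h := Eventually.of_forall fun ω (h : ω ∈ C ∩ {ω | tm ω ≤ t' ω}) => h.2)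
        have hFmtop : ∀ᵐ ω ∂P, ω ∈ C → Φ tm ω = ⊤ := by
          filter_upwards [hFm] with ω e h; rw [e]; exact h.2
        filter_upwards [hD, hFmtop] with ω hDω hCtop
        by_cases hc : ω ∈ C
        · by_cases h' : tm ω ≤ t' ω
          · have : Φ t' ω = ⊤ := top_le_iff.mp ((hCtop hc).symm.le.trans (hDω ⟨hc, h'⟩))
            simp [this]
          · have hsn : sn ω = (n:ℝ≥0) * (t ω)⁻¹ := Set.indicator_of_mem hc _
            have hwn : wn ω = (((n:ℝ≥0)*mu : ℝ≥0) : ℝ≥0∞) := Set.indicator_of_mem hc _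
            have hb : t' ω * sn ω ≤ (n:ℝ≥0) * mu := by
              rw [hsn]
              calc t' ω * ((n:ℝ≥0)*(t ω)⁻¹) ≤ (mu * t ω) * ((n:ℝ≥0)*(t ω)⁻¹) :=
                    mul_le_mul_left (le_of_lt (not_le.mp h')) _
                _ = (n:ℝ≥0)*mu * (t ω * (t ω)⁻¹) := by ring
                _ = (n:ℝ≥0)*mu := by rw [mul_inv_cancel₀ (ne_of_gt hc.1), mul_one]
            rw [hwn]
            exact tsub_le_self.trans (ENNReal.coe_le_coe.2 hb)
        · have h0 : sn ω = 0 := Set.indicator_of_notMem hc _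
          simp [h0]
      have hΨle := (hΨ sn hsnm).2.2 wn hwnm.aemeasurable hub
      filter_upwards [hΨle, hv sn hsnm] with ω h1 h2 hc
      have hsn : sn ω = (n:ℝ≥0) * (t ω)⁻¹ := Set.indicator_of_mem hc _
      have hst : sn ω * t ω = (n:ℝ≥0) := by
        rw [hsn, mul_assoc, inv_mul_cancel₀ (ne_of_gt hc.1), mul_one]
      have hwn : wn ω = (((n:ℝ≥0)*mu:ℝ≥0) : ℝ≥0∞) := Set.indicator_of_mem hc _
      have e1 : (n:ℝ≥0∞) * ((1 - mu : ℝ≥0) : ℝ≥0∞) = ((n:ℝ≥0∞)) - (((n:ℝ≥0)*mu:ℝ≥0) : ℝ≥0∞) := by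
        rw [← ENNReal.coe_natCast, ← ENNReal.coe_mul, ← ENNReal.coe_sub]
        congr 1
        rw [← NNReal.coe_inj]
        push_cast [NNReal.coe_sub hmu1.le, NNReal.coe_sub (show (n:ℝ≥0)*mu ≤ (n:ℝ≥0) from
          mul_le_of_le_one_right zero_le hmu1.le)]
        ring
      rw [e1]
      refine le_trans (tsub_le_tsub (le_of_eq ?_) (h1.trans_eq hwn)) h2
      rw [hst]
      exact (ENNReal.coe_natCast n).symm
    rw [← ae_all_iff] at key
    filter_upwards [key] with ω h hc
    have h2 : ∀ n : ℕ, (n:ℝ≥0∞) * ((1-mu:ℝ≥0):ℝ≥0∞) ≤ v ω := fun n => h n hc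
    have h3 : (⨆ n : ℕ, (n:ℝ≥0∞) * ((1-mu:ℝ≥0):ℝ≥0∞)) ≤ v ω := iSup_le h2
    rw [← ENNReal.iSup_mul, ENNReal.iSup_natCast,
      ENNReal.top_mul (ENNReal.coe_ne_zero.2 (ne_of_gt (tsub_pos_of_lt hmu1)))] at h3
    exact top_le_iff.mp h3
  -- Region G
  set s : Ω → ℝ≥0 := G.indicator
      (fun ω => ((Fm ω - Fl ω) / (((mu - lam) * t ω : ℝ≥0) : ℝ≥0∞)).toNNReal) with hsdef
  have hsm : Measurable s :=
    (((hFmm.sub hFlm).div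
      ((ht.const_mul (mu-lam)).coe_nnreal_ennreal)).ennreal_toNNReal).indicator hGm
  set w : Ω → ℝ≥0∞ := G.indicator
      (fun ω => (s ω : ℝ≥0∞) * (tm ω : ℝ≥0∞) - Fl ω) with hwdef
  have hwm : Measurable w :=
    ((hsm.coe_nnreal_ennreal.mul htmm.coe_nnreal_ennreal).sub hFlm).indicator hGm
  have hdd0 : ∀ ω, ω ∈ G → ((mu - lam) * t ω : ℝ≥0) ≠ 0 := fun ω hmem =>
    mul_ne_zero (ne_of_gt (tsub_pos_of_lt hlm)) (ne_of_gt hmem.1)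
  have hsd : ∀ᵐ ω ∂P, ω ∈ G →
      (s ω : ℝ≥0∞) * (((mu - lam) * t ω : ℝ≥0) : ℝ≥0∞) + Fl ω = Fm ω := by
    filter_upwards [hFle] with ω hle hmem
    have hFmt : Fm ω ≠ ⊤ := hmem.2
    have hdiv_ne : (Fm ω - Fl ω) / (((mu-lam)*t ω : ℝ≥0) : ℝ≥0∞) ≠ ⊤ :=
      (ENNReal.div_lt_top (ne_top_of_le_ne_top hFmt tsub_le_self)
        (by exact_mod_cast hdd0 ω hmem)).ne
    have hsω : s ω = ((Fm ω - Fl ω) / (((mu-lam)*t ω : ℝ≥0) : ℝ≥0∞)).toNNReal :=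
      Set.indicator_of_mem hmem _
    rw [hsω, ENNReal.coe_toNNReal hdiv_ne,
      ENNReal.div_mul_cancel (by exact_mod_cast hdd0 ω hmem) ENNReal.coe_ne_top,
      tsub_add_cancel_of_le hle]
  have hs_le : ∀ᵐ ω ∂P, ω ∈ G → Fl ω ≤ (s ω : ℝ≥0∞) * (tm ω : ℝ≥0∞) := by
    filter_upwards [hsd, hFconv, hFle] with ω hsdω hconvω hle hmem
    have hFmt : Fm ω ≠ ⊤ := hmem.2
    have hFlt : Fl ω ≠ ⊤ := ne_top_of_le_ne_top hFmt hle
    have hc0 : ((mu - lam : ℝ≥0) : ℝ≥0∞) ≠ 0 :=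
      ENNReal.coe_ne_zero.2 (ne_of_gt (tsub_pos_of_lt hlm))
    rw [← ENNReal.mul_le_mul_iff_left hc0 ENNReal.coe_ne_top]
    have hrhs : (s ω : ℝ≥0∞) * (tm ω : ℝ≥0∞) * ((mu-lam : ℝ≥0) : ℝ≥0∞)
        = ((s ω : ℝ≥0∞) * (((mu-lam)*t ω : ℝ≥0) : ℝ≥0∞)) * ((mu:ℝ≥0) : ℝ≥0∞) := by
      simp only [htmdef]; push_cast; ring
    have hsub : (s ω : ℝ≥0∞) * (((mu-lam)*t ω : ℝ≥0) : ℝ≥0∞) = Fm ω - Fl ω :=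
      ENNReal.eq_sub_of_add_eq hFlt (hsdω hmem)
    rw [hrhs, hsub, ENNReal.sub_mul (fun _ _ => ENNReal.coe_ne_top)]
    refine ENNReal.le_sub_of_add_le_right (ENNReal.mul_ne_top hFlt ENNReal.coe_ne_top) ?_
    calc Fl ω * ((mu-lam:ℝ≥0):ℝ≥0∞) + Fl ω * ((mu:ℝ≥0):ℝ≥0∞)
        = Fl ω * (((mu-lam:ℝ≥0):ℝ≥0∞) + ((mu:ℝ≥0):ℝ≥0∞)) := by ring
      _ ≤ (((lam/mu:ℝ≥0):ℝ≥0∞) * Fm ω) * (((mu-lam:ℝ≥0):ℝ≥0∞) + ((mu:ℝ≥0):ℝ≥0∞)) :=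
          mul_le_mul_left hconvω _
      _ = Fm ω * (((lam/mu)*((mu-lam)+mu) : ℝ≥0) : ℝ≥0∞) := by push_cast; ring
      _ ≤ Fm ω * ((mu:ℝ≥0):ℝ≥0∞) :=
          mul_le_mul_right (ENNReal.coe_le_coe.2 (nnkey lam mu hlm hmu0)) _
  have hub : ∀ t' : Ω → ℝ≥0, Measurable t' →
      (fun ω => ((t' ω * s ω : ℝ≥0) : ℝ≥0∞) - Φ t' ω) ≤ᵐ[P] w := by
    intro t' ht'
    set Ra : Set Ω := G ∩ {ω | tm ω ≤ t' ω} with hRadef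
    set Rc : Set Ω := G ∩ {ω | t' ω ≤ tl ω} with hRcdef
    set Rb : Set Ω := G ∩ ({ω | tl ω ≤ t' ω} ∩ {ω | t' ω ≤ tm ω}) with hRbdef
    have hRam : MeasurableSet Ra := hGm.inter (measurableSet_le htmm ht')
    have hRcm : MeasurableSet Rc := hGm.inter (measurableSet_le ht' htlm)
    have hRbm : MeasurableSet Rb :=
      hGm.inter ((measurableSet_le htlm ht').inter (measurableSet_le ht' htmm))
    -- inequality T on region Ra
    have Ta : ∀ᵐ ω ∂P, ω ∈ Ra →
        ((t' ω * s ω : ℝ≥0) : ℝ≥0∞) + Fl ω ≤ Φ t' ω + (s ω : ℝ≥0∞) * (tm ω : ℝ≥0∞) := by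
      set ζa : Ω → ℝ≥0 := Ra.indicator (fun ω => (t' ω - tm ω) / (t' ω - tl ω)) with hζadef
      have hζam : Measurable ζa := ((ht'.sub htmm).div (ht'.sub htlm)).indicator hRam
      have hζa1 : ∀ ω, ζa ω ≤ 1 := by
        intro ω
        by_cases h : ω ∈ Ra
        · rw [hζadef, Set.indicator_of_mem h]
          exact div_le_one_of_le₀ (tsub_le_tsub_left (htltm ω) _) zero_le
        · rw [hζadef, Set.indicator_of_notMem h]; exact zero_le_one
      have hcomb : ∀ ω, ω ∈ Ra → tm ω = ζa ω * tl ω + (1 - ζa ω) * t' ω := by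
        intro ω h
        rw [hζadef, Set.indicator_of_mem h]
        exact nna1 lam mu (t ω) (t' ω) hlm h.1.1 h.2
      have hcv := RO.convexOn hΦ hRam hζam (Eventually.of_forall hζa1) htmm htlm ht'
        (Eventually.of_forall hcomb)
      filter_upwards [hcv, hFl, hFm, hFle, hsd] with ω hcvω e1 e2 hle hsdω hmem
      obtain ⟨hg, hy⟩ := hmem
      have hx : 0 < t ω := hg.1
      have hy' : mu * t ω ≤ t' ω := hy
      have hFmt : Fm ω ≠ ⊤ := hg.2
      have hFlt : Fl ω ≠ ⊤ := ne_top_of_le_ne_top hFmt hle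
      by_cases hp : Φ t' ω = ⊤
      · rw [hp]; simp
      have hζω : ζa ω = (t' ω - tm ω) / (t' ω - tl ω) := Set.indicator_of_mem (show ω ∈ Ra from ⟨hg, hy⟩) _
      have hlty : tl ω < t' ω :=
        lt_of_lt_of_le (show tl ω < tm ω from mul_lt_mul_of_pos_right hlm hx) hy
      have hδ0 : t' ω - tl ω ≠ 0 := ne_of_gt (tsub_pos_of_lt hlty)
      have f1 : Fm ω ≤ (ζa ω : ℝ≥0∞) * Fl ω + ((1 - ζa ω : ℝ≥0) : ℝ≥0∞) * Φ t' ω := by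
        rw [← e2, ← e1]
        exact hcvω (show ω ∈ Ra from ⟨hg, hy⟩)
      have f3 : ζa ω * (t' ω - tl ω) = t' ω - tm ω := by
        rw [hζω]; exact div_mul_cancel₀ _ hδ0
      have f4 : (1 - ζa ω) * (t' ω - tl ω) = (mu - lam) * t ω := by
        rw [hζω]
        have h := nna3 lam mu (t ω) (t' ω) hlm hx hy'
        simpa only [htldef, htmdef] using h
      have f5 : (t' ω - tm ω) + (mu - lam) * t ω = t' ω - tl ω := by
        have hdm : (mu - lam) * t ω = tm ω - tl ω := by
          simp only [htmdef, htldef]; exact tsub_mul mu lam (t ω)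
        rw [hdm]
        exact tsub_add_tsub_cancel hy (htltm ω)
      have f6 : (t' ω - tl ω) + tl ω = t' ω := tsub_add_cancel_of_le hlty.le
      have hsdω' : (s ω : ℝ≥0∞) * (((mu - lam) * t ω : ℝ≥0) : ℝ≥0∞) + Fl ω = Fm ω := hsdω hg
      have step1 : Fm ω * ((t' ω - tl ω : ℝ≥0) : ℝ≥0∞)
          ≤ Fl ω * ((t' ω - tm ω : ℝ≥0) : ℝ≥0∞) + Φ t' ω * (((mu-lam)*t ω : ℝ≥0) : ℝ≥0∞) := by
        calc Fm ω * ((t' ω - tl ω : ℝ≥0) : ℝ≥0∞)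
            ≤ ((ζa ω : ℝ≥0∞) * Fl ω + ((1 - ζa ω : ℝ≥0) : ℝ≥0∞) * Φ t' ω)
                * ((t' ω - tl ω : ℝ≥0) : ℝ≥0∞) := mul_le_mul_left f1 _
          _ = Fl ω * (((ζa ω * (t' ω - tl ω)) : ℝ≥0) : ℝ≥0∞)
              + Φ t' ω * ((((1 - ζa ω) * (t' ω - tl ω)) : ℝ≥0) : ℝ≥0∞) := by
              push_cast; ring
          _ = Fl ω * ((t' ω - tm ω : ℝ≥0) : ℝ≥0∞)
              + Φ t' ω * (((mu-lam)*t ω : ℝ≥0) : ℝ≥0∞) := by rw [f3, f4]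
      rw [← hsdω'] at step1
      have hδsplit : ((t' ω - tl ω : ℝ≥0) : ℝ≥0∞)
          = ((t' ω - tm ω : ℝ≥0) : ℝ≥0∞) + (((mu-lam)*t ω : ℝ≥0) : ℝ≥0∞) := by
        rw [← ENNReal.coe_add]; exact_mod_cast f5.symm
      have step3 : ((s ω : ℝ≥0∞) * (((mu-lam)*t ω : ℝ≥0) : ℝ≥0∞) * ((t' ω - tl ω : ℝ≥0) : ℝ≥0∞)
            + Fl ω * (((mu-lam)*t ω : ℝ≥0) : ℝ≥0∞)) + Fl ω * ((t' ω - tm ω : ℝ≥0) : ℝ≥0∞)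
          ≤ Φ t' ω * (((mu-lam)*t ω : ℝ≥0) : ℝ≥0∞) + Fl ω * ((t' ω - tm ω : ℝ≥0) : ℝ≥0∞) := by
        calc ((s ω : ℝ≥0∞) * (((mu-lam)*t ω : ℝ≥0) : ℝ≥0∞) * ((t' ω - tl ω : ℝ≥0) : ℝ≥0∞)
            + Fl ω * (((mu-lam)*t ω : ℝ≥0) : ℝ≥0∞)) + Fl ω * ((t' ω - tm ω : ℝ≥0) : ℝ≥0∞)
            = ((s ω : ℝ≥0∞) * (((mu-lam)*t ω : ℝ≥0) : ℝ≥0∞) + Fl ω)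
                * ((t' ω - tl ω : ℝ≥0) : ℝ≥0∞) := by rw [hδsplit]; ring
          _ ≤ Fl ω * ((t' ω - tm ω : ℝ≥0) : ℝ≥0∞)
              + Φ t' ω * (((mu-lam)*t ω : ℝ≥0) : ℝ≥0∞) := step1
          _ = Φ t' ω * (((mu-lam)*t ω : ℝ≥0) : ℝ≥0∞)
              + Fl ω * ((t' ω - tm ω : ℝ≥0) : ℝ≥0∞) := by ring
      have step4 := (ENNReal.add_le_add_iff_right
        (ENNReal.mul_ne_top hFlt ENNReal.coe_ne_top)).1 step3
      have core : (s ω : ℝ≥0∞) * ((t' ω - tl ω : ℝ≥0) : ℝ≥0∞) + Fl ω ≤ Φ t' ω := by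
        have h2 : ((s ω : ℝ≥0∞) * ((t' ω - tl ω : ℝ≥0) : ℝ≥0∞) + Fl ω)
            * (((mu-lam)*t ω : ℝ≥0) : ℝ≥0∞) ≤ Φ t' ω * (((mu-lam)*t ω : ℝ≥0) : ℝ≥0∞) := by
          calc ((s ω : ℝ≥0∞) * ((t' ω - tl ω : ℝ≥0) : ℝ≥0∞) + Fl ω)
              * (((mu-lam)*t ω : ℝ≥0) : ℝ≥0∞)
              = (s ω : ℝ≥0∞) * (((mu-lam)*t ω : ℝ≥0) : ℝ≥0∞) * ((t' ω - tl ω : ℝ≥0) : ℝ≥0∞)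
                + Fl ω * (((mu-lam)*t ω : ℝ≥0) : ℝ≥0∞) := by ring
            _ ≤ _ := step4
        exact (ENNReal.mul_le_mul_iff_left
          (by exact_mod_cast hdd0 ω hg) ENNReal.coe_ne_top).1 h2
      have hYsplit : ((t' ω : ℝ≥0) : ℝ≥0∞)
          = ((t' ω - tl ω : ℝ≥0) : ℝ≥0∞) + ((tl ω : ℝ≥0) : ℝ≥0∞) := by
        rw [← ENNReal.coe_add]; exact_mod_cast f6.symm
      calc ((t' ω * s ω : ℝ≥0) : ℝ≥0∞) + Fl ω
          = (s ω : ℝ≥0∞) * ((t' ω : ℝ≥0) : ℝ≥0∞) + Fl ω := by push_cast; ring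
        _ = ((s ω : ℝ≥0∞) * ((t' ω - tl ω : ℝ≥0) : ℝ≥0∞) + Fl ω)
            + (s ω : ℝ≥0∞) * ((tl ω : ℝ≥0) : ℝ≥0∞) := by rw [hYsplit]; ring
        _ ≤ Φ t' ω + (s ω : ℝ≥0∞) * ((tl ω : ℝ≥0) : ℝ≥0∞) := add_le_add_left core _
        _ ≤ Φ t' ω + (s ω : ℝ≥0∞) * (tm ω : ℝ≥0∞) :=
            add_le_add le_rfl (mul_le_mul_right (ENNReal.coe_le_coe.2 (htltm ω)) _)
    -- inequality T on region Rc
    have Tc : ∀ᵐ ω ∂P, ω ∈ Rc →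
        ((t' ω * s ω : ℝ≥0) : ℝ≥0∞) + Fl ω ≤ Φ t' ω + (s ω : ℝ≥0∞) * (tm ω : ℝ≥0∞) := by
      set ζc : Ω → ℝ≥0 := Rc.indicator (fun ω => ((mu - lam) * t ω) / (tm ω - t' ω)) with hζcdef
      have hζcm : Measurable ζc := ((ht.const_mul _).div (htmm.sub ht')).indicator hRcm
      have hζc1 : ∀ ω, ζc ω ≤ 1 := by
        intro ω
        by_cases h : ω ∈ Rc
        · rw [hζcdef, Set.indicator_of_mem h]
          refine div_le_one_of_le₀ ?_ zero_le
          have hdm : (mu - lam) * t ω = tm ω - tl ω := by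
            simp only [htmdef, htldef]; exact tsub_mul mu lam (t ω)
          rw [hdm]
          exact tsub_le_tsub_left h.2 _
        · rw [hζcdef, Set.indicator_of_notMem h]; exact zero_le_one
      have hcomb : ∀ ω, ω ∈ Rc → tl ω = ζc ω * t' ω + (1 - ζc ω) * tm ω := by
        intro ω h
        rw [hζcdef, Set.indicator_of_mem h]
        exact nnc1 lam mu (t ω) (t' ω) hlm h.1.1 h.2
      have hcv := RO.convexOn hΦ hRcm hζcm (Eventually.of_forall hζc1) htlm ht' htmm
        (Eventually.of_forall hcomb)
      filter_upwards [hcv, hFl, hFm, hFle, hsd] with ω hcvω e1 e2 hle hsdω hmem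
      obtain ⟨hg, hy⟩ := hmem
      have hx : 0 < t ω := hg.1
      have hy' : t' ω ≤ lam * t ω := hy
      have hFmt : Fm ω ≠ ⊤ := hg.2
      have hFlt : Fl ω ≠ ⊤ := ne_top_of_le_ne_top hFmt hle
      by_cases hp : Φ t' ω = ⊤
      · rw [hp]; simp
      have hζω : ζc ω = ((mu - lam) * t ω) / (tm ω - t' ω) :=
        Set.indicator_of_mem (show ω ∈ Rc from ⟨hg, hy⟩) _
      have hylt : t' ω < tm ω :=
        lt_of_le_of_lt hy (show tl ω < tm ω from mul_lt_mul_of_pos_right hlm hx)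
      have hδ0 : tm ω - t' ω ≠ 0 := ne_of_gt (tsub_pos_of_lt hylt)
      have f1 : Fl ω ≤ (ζc ω : ℝ≥0∞) * Φ t' ω + ((1 - ζc ω : ℝ≥0) : ℝ≥0∞) * Fm ω := by
        rw [← e2, ← e1]
        exact hcvω (show ω ∈ Rc from ⟨hg, hy⟩)
      have f3 : ζc ω * (tm ω - t' ω) = (mu - lam) * t ω := by
        rw [hζω]; exact div_mul_cancel₀ _ hδ0
      have f4 : (1 - ζc ω) * (tm ω - t' ω) = tl ω - t' ω := by
        rw [hζω]
        have h := nnc3 lam mu (t ω) (t' ω) hlm hx hy'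
        simpa only [htldef, htmdef] using h
      have f5 : ((mu - lam) * t ω) + (tl ω - t' ω) = tm ω - t' ω := by
        have hdm : (mu - lam) * t ω = tm ω - tl ω := by
          simp only [htmdef, htldef]; exact tsub_mul mu lam (t ω)
        rw [hdm]
        exact tsub_add_tsub_cancel (htltm ω) hy
      have f6 : (tl ω - t' ω) + t' ω = tl ω := tsub_add_cancel_of_le hy
      have hsdω' : (s ω : ℝ≥0∞) * (((mu - lam) * t ω : ℝ≥0) : ℝ≥0∞) + Fl ω = Fm ω := hsdω hg
      have step1 : Fl ω * ((tm ω - t' ω : ℝ≥0) : ℝ≥0∞)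
          ≤ Φ t' ω * (((mu-lam)*t ω : ℝ≥0) : ℝ≥0∞) + Fm ω * ((tl ω - t' ω : ℝ≥0) : ℝ≥0∞) := by
        calc Fl ω * ((tm ω - t' ω : ℝ≥0) : ℝ≥0∞)
            ≤ ((ζc ω : ℝ≥0∞) * Φ t' ω + ((1 - ζc ω : ℝ≥0) : ℝ≥0∞) * Fm ω)
                * ((tm ω - t' ω : ℝ≥0) : ℝ≥0∞) := mul_le_mul_left f1 _
          _ = Φ t' ω * (((ζc ω * (tm ω - t' ω)) : ℝ≥0) : ℝ≥0∞)
              + Fm ω * ((((1 - ζc ω) * (tm ω - t' ω)) : ℝ≥0) : ℝ≥0∞) := by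
              push_cast; ring
          _ = Φ t' ω * (((mu-lam)*t ω : ℝ≥0) : ℝ≥0∞)
              + Fm ω * ((tl ω - t' ω : ℝ≥0) : ℝ≥0∞) := by rw [f3, f4]
      rw [← hsdω'] at step1
      have hδsplit : ((tm ω - t' ω : ℝ≥0) : ℝ≥0∞)
          = (((mu-lam)*t ω : ℝ≥0) : ℝ≥0∞) + ((tl ω - t' ω : ℝ≥0) : ℝ≥0∞) := by
        rw [← ENNReal.coe_add]; exact_mod_cast f5.symm
      have step3 : (Fl ω * (((mu-lam)*t ω : ℝ≥0) : ℝ≥0∞)) + Fl ω * ((tl ω - t' ω : ℝ≥0) : ℝ≥0∞)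
          ≤ ((Φ t' ω + (s ω : ℝ≥0∞) * ((tl ω - t' ω : ℝ≥0) : ℝ≥0∞))
              * (((mu-lam)*t ω : ℝ≥0) : ℝ≥0∞)) + Fl ω * ((tl ω - t' ω : ℝ≥0) : ℝ≥0∞) := by
        calc (Fl ω * (((mu-lam)*t ω : ℝ≥0) : ℝ≥0∞)) + Fl ω * ((tl ω - t' ω : ℝ≥0) : ℝ≥0∞)
            = Fl ω * ((tm ω - t' ω : ℝ≥0) : ℝ≥0∞) := by rw [hδsplit]; ring
          _ ≤ Φ t' ω * (((mu-lam)*t ω : ℝ≥0) : ℝ≥0∞)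
              + ((s ω : ℝ≥0∞) * (((mu - lam) * t ω : ℝ≥0) : ℝ≥0∞) + Fl ω)
                * ((tl ω - t' ω : ℝ≥0) : ℝ≥0∞) := step1
          _ = ((Φ t' ω + (s ω : ℝ≥0∞) * ((tl ω - t' ω : ℝ≥0) : ℝ≥0∞))
              * (((mu-lam)*t ω : ℝ≥0) : ℝ≥0∞)) + Fl ω * ((tl ω - t' ω : ℝ≥0) : ℝ≥0∞) := by
              ring
      have step4 := (ENNReal.add_le_add_iff_right
        (ENNReal.mul_ne_top hFlt ENNReal.coe_ne_top)).1 step3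
      have core : Fl ω ≤ Φ t' ω + (s ω : ℝ≥0∞) * ((tl ω - t' ω : ℝ≥0) : ℝ≥0∞) :=
        (ENNReal.mul_le_mul_iff_left (by exact_mod_cast hdd0 ω hg) ENNReal.coe_ne_top).1 step4
      have hYsplit : ((tl ω : ℝ≥0) : ℝ≥0∞)
          = ((tl ω - t' ω : ℝ≥0) : ℝ≥0∞) + ((t' ω : ℝ≥0) : ℝ≥0∞) := by
        rw [← ENNReal.coe_add]; exact_mod_cast f6.symm
      calc ((t' ω * s ω : ℝ≥0) : ℝ≥0∞) + Fl ω
          = (s ω : ℝ≥0∞) * ((t' ω : ℝ≥0) : ℝ≥0∞) + Fl ω := by push_cast; ring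
        _ ≤ (s ω : ℝ≥0∞) * ((t' ω : ℝ≥0) : ℝ≥0∞)
            + (Φ t' ω + (s ω : ℝ≥0∞) * ((tl ω - t' ω : ℝ≥0) : ℝ≥0∞)) := add_le_add_right core _
        _ = Φ t' ω + (s ω : ℝ≥0∞) * ((tl ω : ℝ≥0) : ℝ≥0∞) := by rw [hYsplit]; ring
        _ ≤ Φ t' ω + (s ω : ℝ≥0∞) * (tm ω : ℝ≥0∞) :=
            add_le_add le_rfl (mul_le_mul_right (ENNReal.coe_le_coe.2 (htltm ω)) _)
    -- inequality T on region Rb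
    have Tb : ∀ᵐ ω ∂P, ω ∈ Rb →
        ((t' ω * s ω : ℝ≥0) : ℝ≥0∞) + Fl ω ≤ Φ t' ω + (s ω : ℝ≥0∞) * (tm ω : ℝ≥0∞) := by
      have hmn := RO.monoOn hΦ hRbm htlm ht'
        (h := Eventually.of_forall fun ω (h : ω ∈ Rb) => h.2.1)
      filter_upwards [hmn, hFl] with ω hmnω e1 hmem
      have hcore : Fl ω ≤ Φ t' ω := by rw [← e1]; exact hmnω hmem
      calc ((t' ω * s ω : ℝ≥0) : ℝ≥0∞) + Fl ω
          = (s ω : ℝ≥0∞) * ((t' ω : ℝ≥0) : ℝ≥0∞) + Fl ω := by push_cast; ring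
        _ ≤ (s ω : ℝ≥0∞) * (tm ω : ℝ≥0∞) + Φ t' ω :=
            add_le_add (mul_le_mul_right (ENNReal.coe_le_coe.2 hmem.2.2) _) hcore
        _ = Φ t' ω + (s ω : ℝ≥0∞) * (tm ω : ℝ≥0∞) := add_comm _ _
    -- combine the regions
    filter_upwards [Ta, Tb, Tc, hFle] with ω hTa hTb hTc hle
    by_cases hg : ω ∈ G
    · have hFlt : Fl ω ≠ ⊤ := ne_top_of_le_ne_top hg.2 hle
      have hwω : w ω = (s ω : ℝ≥0∞) * (tm ω : ℝ≥0∞) - Fl ω := Set.indicator_of_mem hg _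
      have T : ((t' ω * s ω : ℝ≥0) : ℝ≥0∞) + Fl ω
          ≤ Φ t' ω + (s ω : ℝ≥0∞) * (tm ω : ℝ≥0∞) := by
        rcases le_total (tm ω) (t' ω) with h | h
        · exact hTa (show ω ∈ Ra from ⟨hg, h⟩)
        · rcases le_total (tl ω) (t' ω) with h2 | h2
          · exact hTb (show ω ∈ Rb from ⟨hg, h2, h⟩)
          · exact hTc (show ω ∈ Rc from ⟨hg, h2⟩)
      have T2 : ((t' ω * s ω : ℝ≥0) : ℝ≥0∞) + Fl ω
          ≤ (((s ω : ℝ≥0∞) * (tm ω : ℝ≥0∞) - Fl ω) + Φ t' ω) + Fl ω := by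
        refine T.trans ?_
        calc Φ t' ω + (s ω : ℝ≥0∞) * (tm ω : ℝ≥0∞)
            ≤ Φ t' ω + (((s ω : ℝ≥0∞) * (tm ω : ℝ≥0∞) - Fl ω) + Fl ω) :=
              add_le_add le_rfl le_tsub_add
          _ = (((s ω : ℝ≥0∞) * (tm ω : ℝ≥0∞) - Fl ω) + Φ t' ω) + Fl ω := by ring
      have T3 := (ENNReal.add_le_add_iff_right hFlt).1 T2
      show ((t' ω * s ω : ℝ≥0) : ℝ≥0∞) - Φ t' ω ≤ w ω
      rw [hwω, tsub_le_iff_right]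
      exact T3
    · have h0 : s ω = 0 := Set.indicator_of_notMem hg _
      show ((t' ω * s ω : ℝ≥0) : ℝ≥0∞) - Φ t' ω ≤ w ω
      simp [h0]
  -- conclude on G
  have hG : ∀ᵐ ω ∂P, ω ∈ G → Φ tl ω ≤ v ω := by
    have hΨw := (hΨ s hsm).2.2 w hwm.aemeasurable hub
    filter_upwards [hΨw, hv s hsm, hs_le, hFle, hFl] with ω h1 h2 h3 hle e1 hmem
    have hFlt : Fl ω ≠ ⊤ := ne_top_of_le_ne_top hmem.2 hle
    have hwω : w ω = (s ω : ℝ≥0∞) * (tm ω : ℝ≥0∞) - Fl ω := Set.indicator_of_mem hmem _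
    have hkey : Fl ω ≤ ((s ω * t ω : ℝ≥0) : ℝ≥0∞) - w ω := by
      rw [hwω]
      refine ENNReal.le_sub_of_add_le_right ?_ ?_
      · exact ne_top_of_le_ne_top (ENNReal.mul_ne_top ENNReal.coe_ne_top ENNReal.coe_ne_top)
          tsub_le_self
      · rw [add_tsub_cancel_of_le (h3 hmem)]
        rw [← ENNReal.coe_mul, ENNReal.coe_le_coe]
        exact mul_le_mul_right (mul_le_of_le_one_left zero_le hmu1.le) _
    rw [e1]
    calc Fl ω ≤ ((s ω * t ω : ℝ≥0) : ℝ≥0∞) - w ω := hkey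
      _ ≤ ((s ω * t ω : ℝ≥0) : ℝ≥0∞) - Ψ s ω := tsub_le_tsub le_rfl h1
      _ ≤ v ω := h2
  -- final assembly
  filter_upwards [hFl, hA, hC, hG] with ω e1 hAω hCω hGω
  by_cases h0 : t ω = 0
  · exact hAω h0
  · have hx : 0 < t ω := pos_iff_ne_zero.mpr h0
    by_cases hm : Fm ω = ⊤
    · rw [hCω (show ω ∈ C from ⟨hx, hm⟩)]; exact le_top
    · exact hGω (show ω ∈ G from ⟨hx, hm⟩)

/-- the random conjugate of the random conjugate of a random Orlicz
function `Φ` is `Φ` itself: for every `t ∈ L⁰₊(ℱ)`, the a.e. least upper bound of the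
family `{ t·s ∸ Ψ(s) : s ∈ L⁰₊(ℱ) }` exists and equals `Φ(t)` a.e. -/
theorem random_biconjugate_eq_self
    {Ω : Type*} [MeasurableSpace Ω] (P : Measure Ω) [IsProbabilityMeasure P]
    (Φ : (Ω → ℝ≥0) → Ω → ℝ≥0∞) (hΦ : IsRandomOrlicz P Φ)
    (Ψ : (Ω → ℝ≥0) → Ω → ℝ≥0∞)
    (hΨ : ∀ s : Ω → ℝ≥0, Measurable s → IsAERandomConjugateAt P Φ s (Ψ s)) :
    ∀ t : Ω → ℝ≥0, Measurable t → IsAERandomConjugateAt P Ψ t (Φ t) := by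
  intro t ht
  refine ⟨hΦ.2.1 t ht, ?_, ?_⟩
  · -- Young's inequality
    intro s hs
    have hub := (hΨ s hs).2.1 t ht
    filter_upwards [hub] with ω hω
    rw [tsub_le_iff_right]
    have h1 : ((t ω * s ω : ℝ≥0) : ℝ≥0∞) ≤ Ψ s ω + Φ t ω := tsub_le_iff_right.mp hω
    calc ((s ω * t ω : ℝ≥0) : ℝ≥0∞) = ((t ω * s ω : ℝ≥0) : ℝ≥0∞) := by rw [mul_comm]
      _ ≤ Ψ s ω + Φ t ω := h1
      _ = Φ t ω + Ψ s ω := add_comm _ _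
  · -- minimality
    intro v hvm hv
    set lam : ℕ → ℝ≥0 := fun n => 1 - ((n:ℝ≥0)+1)⁻¹ with hlamdef
    have hpos : ∀ n : ℕ, (0:ℝ≥0) < (n:ℝ≥0)+1 := fun n =>
      lt_of_lt_of_le one_pos (le_add_self)
    have hlam1 : ∀ n, lam n < 1 := fun n =>
      tsub_lt_self one_pos (inv_pos.mpr (hpos n))
    set ts : ℕ → Ω → ℝ≥0 := fun n ω => lam n * t ω with htsdef
    have htsm : ∀ n, Measurable (ts n) := fun n => ht.const_mul _
    have hlammono : ∀ n, lam n ≤ lam (n+1) := by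
      intro n
      apply tsub_le_tsub_left
      have h1 : ((n:ℝ≥0)+1) ≤ (((n+1:ℕ):ℝ≥0)+1) := by push_cast; exact le_add_of_nonneg_right zero_le_one
      exact inv_anti₀ (hpos n) h1
    have htsmono : ∀ n, ts n ≤ᵐ[P] ts (n+1) := fun n =>
      Eventually.of_forall fun ω => mul_le_mul_left (hlammono n) _
    have htsle : ∀ n, ts n ≤ᵐ[P] t := fun n =>
      Eventually.of_forall fun ω => mul_le_of_le_one_left zero_le (hlam1 n).le
    have htim : TendstoInMeasure P ts atTop t := by
      apply tendstoInMeasure_of_tendsto_ae (fun n => (htsm n).aestronglyMeasurable)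
      refine Eventually.of_forall fun ω => ?_
      rw [← NNReal.tendsto_coe]
      have hcoe : ∀ n : ℕ, ((ts n ω : ℝ≥0) : ℝ) = (1 - ((n:ℝ)+1)⁻¹) * (t ω : ℝ) := by
        intro n
        have hle1 : ((n:ℝ≥0)+1)⁻¹ ≤ 1 := by
          rw [inv_le_one_iff₀]
          right; exact le_add_self
        show (((1 - ((n:ℝ≥0)+1)⁻¹) * t ω : ℝ≥0) : ℝ) = _
        push_cast [NNReal.coe_sub hle1]
        ring
      simp only [hcoe]
      have h0 : Tendsto (fun n : ℕ => ((n:ℝ)+1)⁻¹) atTop (nhds 0) := by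
        have := tendsto_one_div_add_atTop_nhds_zero_nat (𝕜 := ℝ)
        simpa [one_div] using this
      have : Tendsto (fun n : ℕ => (1 - ((n:ℝ)+1)⁻¹) * (t ω : ℝ)) atTop
          (nhds ((1 - 0) * (t ω : ℝ))) :=
        ((tendsto_const_nhds.sub h0).mul tendsto_const_nhds)
      simpa using this
    have hleft := hΦ.2.2.2.1 t ht ts htsm htsmono htsle htim
    have hstep : ∀ n, Φ (ts n) ≤ᵐ[P] v := fun n =>
      RO.step1 hΦ hΨ ht hvm hv (lam n) (hlam1 n)
    have hsel : ∀ k : ℕ, ∃ n : ℕ,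
        P {ω | ((k:ℝ≥0∞))⁻¹ ≤ max (Φ (ts n) ω - Φ t ω) (Φ t ω - Φ (ts n) ω)}
          ≤ (2⁻¹ : ℝ≥0∞)^k := by
      intro k
      have h := hleft ((k:ℝ≥0∞))⁻¹ (ENNReal.inv_pos.mpr (ENNReal.natCast_ne_top k))
      have hp : (0:ℝ≥0∞) < 2⁻¹ ^ k :=
        ENNReal.pow_pos (ENNReal.inv_pos.mpr ENNReal.ofNat_ne_top) k
      obtain ⟨n, hn⟩ := (h.eventually_lt_const hp).exists
      exact ⟨n, hn.le⟩
    choose nk hnk using hsel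
    have hsum : (∑' k : ℕ, P {ω | ((k:ℝ≥0∞))⁻¹ ≤
        max (Φ (ts (nk k)) ω - Φ t ω) (Φ t ω - Φ (ts (nk k)) ω)}) ≠ ⊤ := by
      have hgeo : (∑' k : ℕ, (2⁻¹:ℝ≥0∞)^k) = 2 := by
        rw [ENNReal.tsum_geometric]; norm_num
      refine ne_top_of_le_ne_top (show (∑' k : ℕ, (2⁻¹:ℝ≥0∞)^k) ≠ ⊤ by
        rw [hgeo]; exact ENNReal.ofNat_ne_top) ?_
      exact ENNReal.tsum_le_tsum hnk
    have hBC := MeasureTheory.ae_eventually_notMem hsum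
    have hvn : ∀ᵐ ω ∂P, ∀ n, Φ (ts n) ω ≤ v ω := ae_all_iff.2 hstep
    filter_upwards [hBC, hvn] with ω hBCω hvω
    refine ENNReal.le_of_forall_pos_le_add ?_
    intro ε hε _
    obtain ⟨k0, hk0⟩ := exists_nat_gt (ε⁻¹ : ℝ≥0)
    obtain ⟨K, hKnot, hKge⟩ := (hBCω.and (eventually_ge_atTop k0)).exists
    have hεK : (ε⁻¹ : ℝ≥0) < (K:ℝ≥0) := hk0.trans_le (Nat.cast_le.mpr hKge)
    have hKpos : (0:ℝ≥0) < (K:ℝ≥0) := lt_of_le_of_lt zero_le hεK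
    have hKinv : ((K:ℝ≥0))⁻¹ ≤ ε := by
      have h2 : (K:ℝ≥0)⁻¹ < (ε⁻¹)⁻¹ := inv_strictAnti₀ (inv_pos.mpr hε) hεK
      rw [inv_inv] at h2
      exact h2.le
    have hKinv' : ((K:ℝ≥0∞))⁻¹ ≤ (ε : ℝ≥0∞) := by
      rw [← ENNReal.coe_natCast, ← ENNReal.coe_inv (ne_of_gt hKpos)]
      exact ENNReal.coe_le_coe.2 hKinv
    have hB : Φ t ω - Φ (ts (nk K)) ω < ((K:ℝ≥0∞))⁻¹ := by
      by_contra hcon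
      exact hKnot ((not_lt.mp hcon).trans (le_max_right _ _))
    calc Φ t ω ≤ Φ (ts (nk K)) ω + ((K:ℝ≥0∞))⁻¹ := by
          rw [add_comm]
          exact tsub_le_iff_right.mp hB.le
      _ ≤ v ω + (ε : ℝ≥0∞) := add_le_add (hvω _) hKinv'
end
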